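/- Let H be a real Hilbert space and let U and V be closed subspaces of H with orthogonal projections P_U, P_V : H → H (regarded as continuous linear endomorphisms of H). If P_U − P_V is a compact operator, then the subspaces U ∩ V^⊥ and U^⊥ ∩ V are both finite-dimensional. -/

import Mathlib

/-- A normed space on which the identity is a compact operator is finite-dimensional. -/
lemma finiteDimensional_of_isCompactOperator_id
    {W : Type*} [NormedAddCommGroup W] [NormedSpace ℝ W]
    (h : IsCompactOperator (id : W → W)) : FiniteDimensional ℝ W := by
  obtain ⟨K, hK, hKmem⟩ := h
  obtain ⟨r, hr, hball⟩ := Metric.mem_nhds_iff.mp hKmem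
  refine FiniteDimensional.of_isCompact_closedBall₀ (𝕜 := ℝ) (half_pos hr) ?_
  exact hK.of_isClosed_subset Metric.isClosed_closedBall
    ((Metric.closedBall_subset_ball (half_lt_self hr)).trans hball)

/-- If a compact operator acts as the identity on a closed submodule,
that submodule is finite-dimensional. -/
lemma finiteDimensional_of_isCompactOperator_fixed
    {H : Type*} [NormedAddCommGroup H] [InnerProductSpace ℝ H]
    {T : H →L[ℝ] H} (hT : IsCompactOperator ⇑T) {W : Submodule ℝ H}
    (hWc : IsClosed (W : Set H)) (hfix : ∀ x ∈ W, T x = x) :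
    FiniteDimensional ℝ ↥W := by
  have hres : IsCompactOperator ((T : H →ₗ[ℝ] H).restrict
      (fun x hx => by show T x ∈ W; rw [hfix x hx]; exact hx)) :=
    IsCompactOperator.restrict hT _ hWc
  have : ((T : H →ₗ[ℝ] H).restrict
      (fun x hx => by show T x ∈ W; rw [hfix x hx]; exact hx) : W → W) = id := by
    funext x
    exact Subtype.ext (hfix x x.2)
  rw [this] at hres
  exact finiteDimensional_of_isCompactOperator_id hres

theorem finiteDimensional_of_compact_projection_diff
    {H : Type*} [NormedAddCommGroup H] [InnerProductSpace ℝ H] [CompleteSpace H]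
    (U V : Submodule ℝ H) (hU : IsClosed (U : Set H)) (hV : IsClosed (V : Set H))
    [CompleteSpace U] [CompleteSpace V]
    (hcomp : IsCompactOperator
      ⇑(U.subtypeL.comp (U.orthogonalProjection) - V.subtypeL.comp (V.orthogonalProjection))) :
    FiniteDimensional ℝ ↥(U ⊓ Vᗮ) ∧ FiniteDimensional ℝ ↥(Uᗮ ⊓ V) := by
  set T := U.subtypeL.comp (U.orthogonalProjection) - V.subtypeL.comp (V.orthogonalProjection)
  constructor
  · refine finiteDimensional_of_isCompactOperator_fixed hcomp ?_ ?_
    · exact hU.inter V.isClosed_orthogonal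
    · rintro x ⟨hxU, hxV⟩
      simp [T, Submodule.starProjection_eq_self_iff.mpr hxU,
        Submodule.orthogonalProjectionOnto_apply_of_mem_orthogonal hxV]
  · have hneg : IsCompactOperator ⇑(-T) := by
      have := hcomp.neg
      simpa using this
    refine finiteDimensional_of_isCompactOperator_fixed hneg ?_ ?_
    · exact U.isClosed_orthogonal.inter hV
    · rintro x ⟨hxU, hxV⟩
      simp [T, Submodule.starProjection_eq_self_iff.mpr hxV,
        Submodule.orthogonalProjectionOnto_apply_of_mem_orthogonal hxU]
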